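/- For every h > 0, the maximal solution β of β'' = W'(β) with β(0) = 0 and β'(0) = √(2h) is strictly increasing, defined exactly on (−l⁻(h), l⁺(h)) with l⁺(h) = ∫₀^∞ ds/√(2(W(s)+h)) < ∞ and l⁻(h) = ∫_{−∞}^0 ds/√(2(W(s)+h)) < ∞, and maps its domain onto ℝ. -/

import Mathlib

set_option maxHeartbeats 1000000
open scoped Topology


open MeasureTheory Set Filter

theorem maximal_solution_beta
    (W : ℝ → ℝ) (hW : ContDiff ℝ 2 W) (hWnn : ∀ t, 0 ≤ W t)
    (hWconv : ConvexOn ℝ Set.univ W) (hWvan : ∀ t, W t = 0 ↔ t = 0)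
    (hWint : IntegrableOn (fun u => 1 / Real.sqrt (W u)) {u : ℝ | 1 < |u|})
    (h : ℝ) (hh : 0 < h) :
    ∃ (lm lp : ℝ) (β β' : ℝ → ℝ),
      IntegrableOn (fun s => 1 / Real.sqrt (2 * (W s + h))) (Ioi (0:ℝ)) ∧
      IntegrableOn (fun s => 1 / Real.sqrt (2 * (W s + h))) (Iio (0:ℝ)) ∧
      lp = (∫ s in Ioi (0:ℝ), 1 / Real.sqrt (2 * (W s + h))) ∧
      lm = (∫ s in Iio (0:ℝ), 1 / Real.sqrt (2 * (W s + h))) ∧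
      0 < lm ∧ 0 < lp ∧
      (∀ x ∈ Ioo (-lm) lp, HasDerivAt β (β' x) x ∧ HasDerivAt β' (deriv W (β x)) x) ∧
      β 0 = 0 ∧ β' 0 = Real.sqrt (2 * h) ∧
      StrictMonoOn β (Ioo (-lm) lp) ∧
      β '' (Ioo (-lm) lp) = univ ∧
      Tendsto β (nhdsWithin lp (Iio lp)) atTop ∧
      Tendsto β (nhdsWithin (-lm) (Ioi (-lm))) atBot := by
  classical
  set g : ℝ → ℝ := fun s => 1 / Real.sqrt (2 * (W s + h)) with hg_def
  have hWpos : ∀ s : ℝ, 0 < 2 * (W s + h) := fun s => by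
    have := hWnn s; linarith
  have hgpos : ∀ s, 0 < g s := fun s =>
    one_div_pos.mpr (Real.sqrt_pos.mpr (hWpos s))
  have hWc : Continuous W := hW.continuous
  have hg_cont : Continuous g := by
    apply continuous_const.div
    · exact ((continuous_const.mul (hWc.add continuous_const)).sqrt)
    · intro s; exact ne_of_gt (Real.sqrt_pos.mpr (hWpos s))
  -- integrability on the far region by comparison
  have hSmeas : MeasurableSet {u : ℝ | 1 < |u|} :=
    (isOpen_lt continuous_const continuous_abs).measurableSet
  have hfar : IntegrableOn g {u : ℝ | 1 < |u|} := by
    refine hWint.mono' (hg_cont.aestronglyMeasurable.restrict) ?_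
    rw [ae_restrict_iff' hSmeas]
    refine Filter.Eventually.of_forall (fun u hu => ?_)
    have hu0 : u ≠ 0 := by
      intro h0; rw [h0] at hu; simp at hu; linarith [hu]
    have hWu : 0 < W u := (hWnn u).lt_of_ne (fun e => hu0 ((hWvan u).mp e.symm))
    have h1 : Real.sqrt (W u) ≤ Real.sqrt (2 * (W u + h)) :=
      Real.sqrt_le_sqrt (by linarith)
    have h2 : g u ≤ 1 / Real.sqrt (W u) :=
      one_div_le_one_div_of_le (Real.sqrt_pos.mpr hWu) h1
    rw [Real.norm_of_nonneg (le_of_lt (hgpos u))]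
    exact h2
  have hIoi : IntegrableOn g (Ioi (0:ℝ)) := by
    refine IntegrableOn.mono_set (t := Icc 0 1 ∪ {u : ℝ | 1 < |u|}) ?_ ?_
    · exact (hg_cont.integrableOn_Icc).union hfar
    · intro u hu
      rcases le_or_gt u 1 with h1 | h1
      · exact Or.inl ⟨le_of_lt hu, h1⟩
      · exact Or.inr (by simp [abs_of_pos (lt_trans one_pos h1)]; exact h1)
  have hIio : IntegrableOn g (Iio (0:ℝ)) := by
    refine IntegrableOn.mono_set (t := Icc (-1) 0 ∪ {u : ℝ | 1 < |u|}) ?_ ?_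
    · exact (hg_cont.integrableOn_Icc).union hfar
    · intro u hu
      rcases le_or_gt (-1) u with h1 | h1
      · exact Or.inl ⟨h1, le_of_lt hu⟩
      · exact Or.inr (by rw [Set.mem_setOf_eq, abs_of_neg (lt_trans h1 (by norm_num : (-1:ℝ) < 0))]; linarith)
  set lp : ℝ := ∫ s in Ioi (0:ℝ), g s with hlp_def
  set lm : ℝ := ∫ s in Iio (0:ℝ), g s with hlm_def
  set F : ℝ → ℝ := fun y => ∫ s in (0:ℝ)..y, g s with hF_def
  have hFd : ∀ y, HasStrictDerivAt F (g y) y := fun y =>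
    hg_cont.integral_hasStrictDerivAt 0 y
  have hFcont : Continuous F :=
    continuous_iff_continuousAt.mpr fun y => (hFd y).hasDerivAt.continuousAt
  have hFmono : StrictMono F := by
    intro a b hab
    have hint : ∀ u v : ℝ, IntervalIntegrable g volume u v := fun u v =>
      hg_cont.intervalIntegrable u v
    have hpos : 0 < ∫ s in a..b, g s :=
      intervalIntegral.intervalIntegral_pos_of_pos (hint a b) hgpos hab
    have : F b = F a + ∫ s in a..b, g s := by
      rw [hF_def]
      exact (intervalIntegral.integral_add_adjacent_intervals (hint 0 a) (hint a b)).symm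
    rw [this]; linarith
  have hinj : Function.Injective F := hFmono.injective
  have hFtop : Tendsto F atTop (𝓝 lp) :=
    intervalIntegral_tendsto_integral_Ioi 0 hIoi tendsto_id
  have hFbot : Tendsto F atBot (𝓝 (-lm)) := by
    have hIic : IntegrableOn g (Iic (0:ℝ)) := hIio.congr_set_ae Iio_ae_eq_Iic.symm
    have h1 : Tendsto (fun i => ∫ s in i..(0:ℝ), g s) atBot (𝓝 lm) := by
      have := intervalIntegral_tendsto_integral_Iic 0 hIic tendsto_id
      have heq : (∫ s in Iic (0:ℝ), g s) = lm :=
        setIntegral_congr_set Iio_ae_eq_Iic.symm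
      rwa [heq] at this
    have h2 := h1.neg
    have : (fun i => -∫ s in i..(0:ℝ), g s) = F := by
      funext i; rw [hF_def]; rw [intervalIntegral.integral_symm 0 i, neg_neg]
    rwa [this] at h2
  have hFlt : ∀ y, F y < lp := fun y =>
    lt_of_lt_of_le (hFmono (lt_add_one y))
      (hFmono.monotone.ge_of_tendsto hFtop (y + 1))
  have hFgt : ∀ y, -lm < F y := fun y =>
    lt_of_le_of_lt (hFmono.monotone.le_of_tendsto hFbot (y - 1))
      (hFmono (sub_one_lt y))
  have hF0 : F 0 = 0 := intervalIntegral.integral_same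
  have hlp_pos : 0 < lp := hF0 ▸ hFlt 0
  have hlm_pos : 0 < lm := by have := hFgt 0; rw [hF0] at this; linarith
  have hsurj : ∀ x ∈ Ioo (-lm) lp, ∃ y, F y = x := by
    intro x hx
    obtain ⟨b, hb⟩ := (hFtop.eventually (eventually_gt_nhds hx.2)).exists
    obtain ⟨a, ha⟩ := (hFbot.eventually (eventually_lt_nhds hx.1)).exists
    have hmem : x ∈ uIcc (F a) (F b) :=
      Set.mem_uIcc.mpr (Or.inl ⟨le_of_lt ha, le_of_lt hb⟩)
    obtain ⟨c, _, hc⟩ := intermediate_value_uIcc (hFcont.continuousOn) hmem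
    exact ⟨c, hc⟩
  set β : ℝ → ℝ := Function.invFun F with hβ_def
  have hleft : ∀ y, β (F y) = y := fun y => Function.leftInverse_invFun hinj y
  have hright : ∀ x ∈ Ioo (-lm) lp, F (β x) = x := fun x hx =>
    Function.invFun_eq (hsurj x hx)
  set β' : ℝ → ℝ := fun x => Real.sqrt (2 * (W (β x) + h)) with hβ'_def
  have hβd : ∀ x ∈ Ioo (-lm) lp, HasStrictDerivAt β (β' x) x := by
    intro x hx
    have h1 := (hFd (β x)).to_local_left_inverse (f' := g (β x))
      (ne_of_gt (hgpos (β x))) (Filter.Eventually.of_forall hleft)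
    rw [hright x hx] at h1
    have : (g (β x))⁻¹ = β' x := by
      rw [hg_def, hβ'_def]; simp [one_div]
    rwa [this] at h1
  have hWdiff : Differentiable ℝ W := hW.differentiable (by norm_num)
  have hβ'd : ∀ x ∈ Ioo (-lm) lp, HasDerivAt β' (deriv W (β x)) x := by
    intro x hx
    set c := β x with hc
    have hs : Real.sqrt (2 * (W c + h)) ≠ 0 := ne_of_gt (Real.sqrt_pos.mpr (hWpos c))
    have hinner : HasDerivAt (fun u => 2 * (W u + h)) (2 * deriv W c) c :=
      (((hWdiff c).hasDerivAt).add_const h).const_mul 2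
    have hsq : HasDerivAt (fun u => Real.sqrt (2 * (W u + h)))
        (1 / (2 * Real.sqrt (2 * (W c + h))) * (2 * deriv W c)) c :=
      (Real.hasDerivAt_sqrt (ne_of_gt (hWpos c))).comp c hinner
    have hcomp : HasDerivAt (fun y => Real.sqrt (2 * (W (β y) + h)))
        ((1 / (2 * Real.sqrt (2 * (W c + h))) * (2 * deriv W c)) * β' x) x :=
      by have := hsq.comp x ((hβd x hx).hasDerivAt); exact this
    have heq : (1 / (2 * Real.sqrt (2 * (W c + h))) * (2 * deriv W c)) * β' x
        = deriv W c := by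
      have key : ∀ s d : ℝ, s ≠ 0 → 1 / (2 * s) * (2 * d) * s = d := by
        intro s d hs0; field_simp
      simp only [hβ'_def, ← hc]
      exact key _ _ hs
    rw [heq] at hcomp
    exact hcomp
  have hβ0 : β 0 = 0 := by
    have := hleft 0; rwa [hF0] at this
  refine ⟨lm, lp, β, β', hIoi, hIio, rfl, rfl, hlm_pos, hlp_pos, ?_, hβ0, ?_, ?_, ?_, ?_, ?_⟩
  · exact fun x hx => ⟨(hβd x hx).hasDerivAt, hβ'd x hx⟩
  · rw [hβ'_def]; simp [hβ0, (hWvan 0).mpr rfl]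
  · intro a ha b hb hab
    have := hFmono.lt_iff_lt (a := β a) (b := β b)
    apply this.mp
    rw [hright a ha, hright b hb]; exact hab
  · ext y
    simp only [Set.mem_image, Set.mem_univ, iff_true]
    exact ⟨F y, ⟨hFgt y, hFlt y⟩, hleft y⟩
  · rw [tendsto_atTop]
    intro M
    have hmem : Ioo (F M) lp ∈ nhdsWithin lp (Iio lp) :=
      Ioo_mem_nhdsLT_of_mem ⟨hFlt M, le_refl lp⟩
    filter_upwards [hmem] with x hx
    have hxIoo : x ∈ Ioo (-lm) lp := ⟨lt_trans (hFgt M) hx.1, hx.2⟩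
    have : F M < F (β x) := by rw [hright x hxIoo]; exact hx.1
    exact le_of_lt (hFmono.lt_iff_lt.mp this)
  · rw [tendsto_atBot]
    intro M
    have hmem : Ioo (-lm) (F M) ∈ nhdsWithin (-lm) (Ioi (-lm)) :=
      Ioo_mem_nhdsGT_of_mem ⟨le_refl (-lm), hFgt M⟩
    filter_upwards [hmem] with x hx
    have hxIoo : x ∈ Ioo (-lm) lp := ⟨hx.1, lt_trans hx.2 (hFlt M)⟩
    have : F (β x) < F M := by rw [hright x hxIoo]; exact hx.2
    exact le_of_lt (hFmono.lt_iff_lt.mp this)
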